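/- Amenability of the indefinite integral: if K is a compact line, G : K → ℝ is amenable, and f : K → ℝ is G-integrable, then F(x) := ∫_{0_K}^x f dG is a well-defined amenable function, and for every c ∈ K one has F(c) − L_F(c) = f(c)(G(c) − L_G(c)). In particular, F is continuous at every point where G is continuous. -/

import Mathlib

open Set Filter MeasureTheory

/-- A tagged partition of the interval `[a,b]` in a linear order `K`. -/
structure TaggedPartition (K : Type*) [LinearOrder K] (a b : K) where
  n : ℕ
  x : ℕ → K
  t : ℕ → K
  x_zero : x 0 = a
  x_last : x n = b
  mono : ∀ i < n, x i ≤ x (i + 1)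
  tag_mem : ∀ i < n, t (i + 1) ∈ Set.Icc (x i) (x (i + 1))

/-- A gauge on the interval `[a,b]` of `K`: each point of `[a,b]` is assigned a
relatively open subinterval of `[a,b]` containing it. -/
def IsGauge (K : Type*) [LinearOrder K] [TopologicalSpace K] (a b : K) (δ : K → Set K) : Prop :=
  ∀ x ∈ Set.Icc a b, x ∈ δ x ∧ (δ x).OrdConnected ∧ ∃ U, IsOpen U ∧ δ x = U ∩ Set.Icc a b

/-- A tagged partition is `δ`-fine when `(x_{i-1}, x_i] ⊆ δ(t_i)` for all `i`. -/
def TaggedPartition.IsFine {K : Type*} [LinearOrder K] {a b : K}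
    (P : TaggedPartition K a b) (δ : K → Set K) : Prop :=
  ∀ i < P.n, Set.Ioc (P.x i) (P.x (i + 1)) ⊆ δ (P.t (i + 1))

/-- The Riemann sum `S(f,G,P) = f(a)G(a) + Σ f(t_i)(G(x_i) - G(x_{i-1}))`. -/
noncomputable def riemannSum {K : Type*} [LinearOrder K] {a b : K}
    (f G : K → ℝ) (P : TaggedPartition K a b) : ℝ :=
  f a * G a + ∑ i ∈ Finset.range P.n, f (P.t (i + 1)) * (G (P.x (i + 1)) - G (P.x i))

/-- `f` has Kurzweil–Stieltjes integral `A` with respect to `G` over `[a,b]`. -/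
def HasIntegral {K : Type*} [LinearOrder K] [TopologicalSpace K]
    (f G : K → ℝ) (a b : K) (A : ℝ) : Prop :=
  ∀ ε : ℝ, 0 < ε → ∃ δ : K → Set K, IsGauge K a b δ ∧
    ∀ P : TaggedPartition K a b, P.IsFine δ → |riemannSum f G P - A| < ε

/-- `G` is amenable: right-continuous everywhere, and regulated (left limits exist at
left-dense points, right limits at right-dense points). -/
def Amenable {K : Type*} [LinearOrder K] [TopologicalSpace K] [BoundedOrder K]
    (G : K → ℝ) : Prop :=
  (∀ x : K, ContinuousWithinAt G (Set.Ici x) x) ∧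
  (∀ x : K, x ≠ ⊥ → (¬ ∃ y, y ⋖ x) → ∃ l, Filter.Tendsto G (nhdsWithin x (Set.Iio x)) (nhds l)) ∧
  (∀ x : K, x ≠ ⊤ → (¬ ∃ y, x ⋖ y) → ∃ l, Filter.Tendsto G (nhdsWithin x (Set.Ioi x)) (nhds l))

open Classical in
/-- `L_G(x)`: `0` at the least element, `G` of the immediate predecessor if `x` is
left-isolated, and the left limit of `G` at `x` if `x` is left-dense. -/
noncomputable def Lfun {K : Type*} [LinearOrder K] [TopologicalSpace K] [BoundedOrder K]
    (G : K → ℝ) (x : K) : ℝ :=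
  if x = ⊥ then 0
  else if h : ∃ y, y ⋖ x then G h.choose
  else Function.leftLim G x

/-- The set of variation sums of `G` over divisions of `[a,b]`. -/
def varSums {K : Type*} [LinearOrder K] (G : K → ℝ) (a b : K) : Set ℝ :=
  {v | ∃ (n : ℕ) (x : ℕ → K), x 0 = a ∧ x n = b ∧ (∀ i < n, x i ≤ x (i + 1)) ∧
        v = ∑ i ∈ Finset.range n, |G (x (i + 1)) - G (x i)|}

/-- `S` is null for the outer measure induced by `μ` via covers by countably many
open intervals. -/
def GNull {K : Type*} [LinearOrder K] [TopologicalSpace K] [MeasurableSpace K]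
    (μ : MeasureTheory.Measure K) (S : Set K) : Prop :=
  ∀ ε : ℝ, 0 < ε → ∃ I : ℕ → Set K, (∀ n, IsOpen (I n) ∧ (I n).OrdConnected) ∧
    S ⊆ ⋃ n, I n ∧ ∑' n, μ (I n) < ENNReal.ofReal ε

section PartitionAPI

variable {K : Type*} [LinearOrder K]

/-- Partition sum without the `f a * G a` term. -/
noncomputable def psum {a b : K} (f G : K → ℝ) (P : TaggedPartition K a b) : ℝ :=
  ∑ i ∈ Finset.range P.n, f (P.t (i + 1)) * (G (P.x (i + 1)) - G (P.x i))

theorem riemannSum_eq {a b : K} (f G : K → ℝ) (P : TaggedPartition K a b) :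
    riemannSum f G P = f a * G a + psum f G P := rfl

theorem TaggedPartition.x_mono {a b : K} (P : TaggedPartition K a b) :
    ∀ j, j ≤ P.n → ∀ i, i ≤ j → P.x i ≤ P.x j := by
  intro j
  induction j with
  | zero =>
      intro _ i hi
      have : i = 0 := by omega
      simp [this]
  | succ j ih =>
      intro hj i hi
      rcases Nat.lt_or_ge i (j+1) with h | h
      · exact le_trans (ih (by omega) i (by omega)) (P.mono j (by omega))
      · have : i = j + 1 := by omega
        simp [this]

theorem TaggedPartition.le {a b : K} (P : TaggedPartition K a b) : a ≤ b := by
  have := P.x_mono P.n le_rfl 0 (Nat.zero_le _)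
  rwa [P.x_zero, P.x_last] at this

/-- Trivial partition of `[a,a]`. -/
def TaggedPartition.refl (a : K) : TaggedPartition K a a where
  n := 0
  x := fun _ => a
  t := fun _ => a
  x_zero := rfl
  x_last := rfl
  mono := fun i h => absurd h (Nat.not_lt_zero i)
  tag_mem := fun i h => absurd h (Nat.not_lt_zero i)

theorem psum_refl {a : K} (f G : K → ℝ) : psum f G (TaggedPartition.refl a) = 0 := by
  simp [psum, TaggedPartition.refl]

theorem isFine_refl {a : K} (δ : K → Set K) : (TaggedPartition.refl a).IsFine δ :=
  fun i h => absurd h (Nat.not_lt_zero i)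

/-- Single-interval partition of `[a,b]` with tag `t0`. -/
def TaggedPartition.single (a b t0 : K) (h1 : a ≤ t0) (h2 : t0 ≤ b) :
    TaggedPartition K a b where
  n := 1
  x := fun i => if i = 0 then a else b
  t := fun _ => t0
  x_zero := rfl
  x_last := rfl
  mono := by
    intro i hi
    have : i = 0 := by omega
    subst this
    simpa using le_trans h1 h2
  tag_mem := by
    intro i hi
    have : i = 0 := by omega
    subst this
    simpa using ⟨h1, h2⟩

theorem psum_single {a b t0 : K} (f G : K → ℝ) (h1 : a ≤ t0) (h2 : t0 ≤ b) :
    psum f G (TaggedPartition.single a b t0 h1 h2) = f t0 * (G b - G a) := by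
  simp [psum, TaggedPartition.single]

theorem isFine_single {a b t0 : K} {δ : K → Set K} (h1 : a ≤ t0) (h2 : t0 ≤ b)
    (h : Set.Ioc a b ⊆ δ t0) : (TaggedPartition.single a b t0 h1 h2).IsFine δ := by
  intro i hi
  have hi1 : i < 1 := hi
  have : i = 0 := by omega
  subst this
  simpa [TaggedPartition.single] using h

/-- Concatenation of tagged partitions. -/
def TaggedPartition.append {a b c : K} (P : TaggedPartition K a b) (Q : TaggedPartition K b c) :
    TaggedPartition K a c where
  n := P.n + Q.n
  x := fun i => if i ≤ P.n then P.x i else Q.x (i - P.n)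
  t := fun i => if i ≤ P.n then P.t i else Q.t (i - P.n)
  x_zero := by simp [P.x_zero]
  x_last := by
    by_cases h : P.n + Q.n ≤ P.n
    · have hq : Q.n = 0 := by omega
      have hpq : P.n + Q.n = P.n := by omega
      beta_reduce
      rw [if_pos h, hpq, P.x_last]
      have h2 := Q.x_last
      rw [hq, Q.x_zero] at h2
      exact h2
    · have : P.n + Q.n - P.n = Q.n := by omega
      simp [h, this, Q.x_last]
  mono := by
    intro i hi
    beta_reduce
    rcases Nat.lt_or_ge i P.n with h | h
    · simp only [if_pos (by omega : i ≤ P.n), if_pos (by omega : i + 1 ≤ P.n)]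
      exact P.mono i h
    · by_cases hip : i ≤ P.n
      · have hi0 : i = P.n := le_antisymm hip h
        subst hi0
        simp only [if_pos le_rfl, if_neg (show ¬ P.n + 1 ≤ P.n by omega)]
        have h1 : P.n + 1 - P.n = 0 + 1 := by omega
        rw [h1, P.x_last]
        have h2 := Q.mono 0 (by omega)
        rwa [Q.x_zero] at h2
      · simp only [if_neg hip, if_neg (show ¬ i + 1 ≤ P.n by omega)]
        have h1 : i + 1 - P.n = (i - P.n) + 1 := by omega
        rw [h1]
        exact Q.mono (i - P.n) (by omega)
  tag_mem := by
    intro i hi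
    beta_reduce
    rcases Nat.lt_or_ge i P.n with h | h
    · simp only [if_pos (by omega : i ≤ P.n), if_pos (by omega : i + 1 ≤ P.n)]
      exact P.tag_mem i h
    · by_cases hip : i ≤ P.n
      · have hi0 : i = P.n := le_antisymm hip h
        subst hi0
        simp only [if_pos le_rfl, if_neg (show ¬ P.n + 1 ≤ P.n by omega)]
        have h1 : P.n + 1 - P.n = 0 + 1 := by omega
        rw [h1, P.x_last]
        have h2 := Q.tag_mem 0 (by omega)
        rwa [Q.x_zero] at h2
      · simp only [if_neg hip, if_neg (show ¬ i + 1 ≤ P.n by omega)]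
        have h1 : i + 1 - P.n = (i - P.n) + 1 := by omega
        rw [h1]
        exact Q.tag_mem (i - P.n) (by omega)

theorem TaggedPartition.append_x_ge {a b c : K} (P : TaggedPartition K a b)
    (Q : TaggedPartition K b c) {i : ℕ} (h : P.n ≤ i) :
    (P.append Q).x i = Q.x (i - P.n) := by
  show (if i ≤ P.n then P.x i else Q.x (i - P.n)) = _
  by_cases hi : i ≤ P.n
  · have : i = P.n := le_antisymm hi h
    subst this
    simp [P.x_last, Q.x_zero]
  · simp [hi]

theorem psum_append {a b c : K} (f G : K → ℝ) (P : TaggedPartition K a b)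
    (Q : TaggedPartition K b c) :
    psum f G (P.append Q) = psum f G P + psum f G Q := by
  have hn : (P.append Q).n = P.n + Q.n := rfl
  rw [psum, hn, Finset.sum_range_add]
  congr 1
  · apply Finset.sum_congr rfl
    intro i hi
    rw [Finset.mem_range] at hi
    have e1 : (P.append Q).t (i + 1) = P.t (i + 1) := by
      show (if i + 1 ≤ P.n then P.t (i+1) else _) = _
      rw [if_pos (by omega)]
    have e2 : (P.append Q).x (i + 1) = P.x (i + 1) := by
      show (if i + 1 ≤ P.n then P.x (i+1) else _) = _
      rw [if_pos (by omega)]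
    have e3 : (P.append Q).x i = P.x i := by
      show (if i ≤ P.n then P.x i else _) = _
      rw [if_pos (by omega)]
    rw [e1, e2, e3]
  · apply Finset.sum_congr rfl
    intro i hi
    rw [Finset.mem_range] at hi
    have e1 : (P.append Q).t (P.n + i + 1) = Q.t (i + 1) := by
      show (if P.n + i + 1 ≤ P.n then _ else Q.t (P.n + i + 1 - P.n)) = _
      rw [if_neg (by omega)]
      congr 1
      omega
    have e2 : (P.append Q).x (P.n + i + 1) = Q.x (i + 1) := by
      rw [P.append_x_ge Q (by omega)]
      congr 1
      omega
    have e3 : (P.append Q).x (P.n + i) = Q.x i := by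
      rw [P.append_x_ge Q (by omega)]
      congr 1
      omega
    rw [e1, e2, e3]

theorem riemannSum_append {a b c : K} (f G : K → ℝ) (P : TaggedPartition K a b)
    (Q : TaggedPartition K b c) :
    riemannSum f G (P.append Q) = riemannSum f G P + psum f G Q := by
  rw [riemannSum_eq, riemannSum_eq, psum_append]
  ring

theorem TaggedPartition.IsFine.append {a b c : K} {P : TaggedPartition K a b}
    {Q : TaggedPartition K b c} {δ : K → Set K} (hP : P.IsFine δ) (hQ : Q.IsFine δ) :
    (P.append Q).IsFine δ := by
  intro i hi
  have hi' : i < P.n + Q.n := hi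
  rcases Nat.lt_or_ge i P.n with h | h
  · have e1 : (P.append Q).t (i + 1) = P.t (i + 1) := by
      show (if i + 1 ≤ P.n then P.t (i+1) else _) = _
      rw [if_pos (by omega)]
    have e2 : (P.append Q).x (i + 1) = P.x (i + 1) := by
      show (if i + 1 ≤ P.n then P.x (i+1) else _) = _
      rw [if_pos (by omega)]
    have e3 : (P.append Q).x i = P.x i := by
      show (if i ≤ P.n then P.x i else _) = _
      rw [if_pos (by omega)]
    rw [e1, e2, e3]
    exact hP i h
  · have e1 : (P.append Q).t (i + 1) = Q.t ((i - P.n) + 1) := by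
      show (if i + 1 ≤ P.n then _ else Q.t (i + 1 - P.n)) = _
      rw [if_neg (by omega)]
      congr 1
      omega
    have e2 : (P.append Q).x (i + 1) = Q.x ((i - P.n) + 1) := by
      rw [P.append_x_ge Q (by omega)]
      congr 1
      omega
    have e3 : (P.append Q).x i = Q.x (i - P.n) := by
      rw [P.append_x_ge Q (by omega)]
    rw [e1, e2, e3]
    exact hQ (i - P.n) (by omega)

theorem TaggedPartition.IsFine.mono {a b : K} {P : TaggedPartition K a b}
    {δ δ' : K → Set K} (hP : P.IsFine δ) (h : ∀ x, δ x ⊆ δ' x) : P.IsFine δ' :=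
  fun i hi => (hP i hi).trans (h _)

end PartitionAPI
section Gauge

variable {K : Type*} [LinearOrder K] [TopologicalSpace K]

theorem IsGauge.inter {a b : K} {δ₁ δ₂ : K → Set K} (h1 : IsGauge K a b δ₁)
    (h2 : IsGauge K a b δ₂) : IsGauge K a b (fun x => δ₁ x ∩ δ₂ x) := by
  intro x hx
  obtain ⟨hm1, hc1, U1, hU1, he1⟩ := h1 x hx
  obtain ⟨hm2, hc2, U2, hU2, he2⟩ := h2 x hx
  refine ⟨⟨hm1, hm2⟩, hc1.inter hc2, U1 ∩ U2, hU1.inter hU2, ?_⟩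
  show δ₁ x ∩ δ₂ x = _
  rw [he1, he2]
  ext z
  simp only [Set.mem_inter_iff]
  tauto

theorem IsGauge.restrict {a b a' b' : K} {δ : K → Set K} (h : IsGauge K a b δ)
    (hsub : Set.Icc a' b' ⊆ Set.Icc a b) :
    IsGauge K a' b' (fun x => δ x ∩ Set.Icc a' b') := by
  intro x hx
  obtain ⟨hm, hc, U, hU, he⟩ := h x (hsub hx)
  refine ⟨⟨hm, hx⟩, hc.inter Set.ordConnected_Icc, U, hU, ?_⟩
  show δ x ∩ Set.Icc a' b' = _
  rw [he, Set.inter_assoc, Set.inter_eq_self_of_subset_right hsub]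

theorem IsGauge.mem_self {a b : K} {δ : K → Set K} (h : IsGauge K a b δ) {x : K}
    (hx : x ∈ Set.Icc a b) : x ∈ δ x := (h x hx).1

theorem IsGauge.icc_subset {a b : K} {δ : K → Set K} (h : IsGauge K a b δ) {x u v : K}
    (hx : x ∈ Set.Icc a b) (hu : u ∈ δ x) (hv : v ∈ δ x) : Set.Icc u v ⊆ δ x :=
  (h x hx).2.1.out hu hv

end Gauge

section Cousin

variable {K : Type*} [LinearOrder K] [TopologicalSpace K] [OrderTopology K] [CompactSpace K]

/-- Cousin's lemma: every gauge on `[a,b]` admits a fine tagged partition. -/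
theorem cousin {a b : K} (hab : a ≤ b) {δ : K → Set K} (hδ : IsGauge K a b δ) :
    ∃ P : TaggedPartition K a b, P.IsFine δ := by
  set S : Set K := {y | y ∈ Set.Icc a b ∧ ∃ P : TaggedPartition K a y, P.IsFine δ} with hS
  have haS : a ∈ S := ⟨⟨le_refl a, hab⟩, TaggedPartition.refl a, isFine_refl δ⟩
  obtain ⟨m, hmcl, hub⟩ : ∃ m, IsGreatest (closure S) m :=
    isClosed_closure.isCompact.exists_isGreatest ⟨a, subset_closure haS⟩
  have hSsub : S ⊆ Set.Icc a b := fun y hy => hy.1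
  have hmIcc : m ∈ Set.Icc a b :=
    closure_minimal hSsub isClosed_Icc hmcl
  have hubS : ∀ y ∈ S, y ≤ m := fun y hy => hub (subset_closure hy)
  obtain ⟨hmδ, hmoc, U, hU, hUeq⟩ := hδ m hmIcc
  have hmU : m ∈ U := by
    have := hmδ; rw [hUeq] at this; exact this.1
  -- Step 1 : m ∈ S
  have hmS : m ∈ S := by
    obtain ⟨y, hyU, hyS⟩ := mem_closure_iff.1 hmcl U hU hmU
    have hym : y ≤ m := hubS y hyS
    have hyδ : y ∈ δ m := by rw [hUeq]; exact ⟨hyU, hyS.1⟩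
    obtain ⟨P, hP⟩ := hyS.2
    refine ⟨hmIcc, P.append (TaggedPartition.single y m m hym le_rfl), hP.append ?_⟩
    exact isFine_single hym le_rfl
      ((Set.Ioc_subset_Icc_self).trans (hδ.icc_subset hmIcc hyδ hmδ))
  -- Step 2 : m = b
  rcases eq_or_lt_of_le hmIcc.2 with hmb | hmb
  · subst hmb
    exact hmS.2
  · exfalso
    obtain ⟨P, hP⟩ := hmS.2
    obtain ⟨l, hlcl, hlb⟩ : ∃ l, IsLeast (closure (Set.Ioc m b)) l :=
      isClosed_closure.isCompact.exists_isLeast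
        ⟨b, subset_closure ⟨hmb, le_rfl⟩⟩
    have hlle : l ≤ b := hlb (subset_closure ⟨hmb, le_rfl⟩)
    have hml : m ≤ l := by
      have : closure (Set.Ioc m b) ⊆ Set.Ici m :=
        closure_minimal (fun z hz => le_of_lt hz.1) isClosed_Ici
      exact this hlcl
    rcases eq_or_lt_of_le hml with rfl | hml'
    · -- l = m : m is a limit of Ioc m b, find z ∈ U ∩ Ioc m b
      have hmcl2 : m ∈ closure (Set.Ioc m b) := hlcl
      obtain ⟨z, hzU, hz⟩ := mem_closure_iff.1 hmcl2 U hU hmU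
      have hzIcc : z ∈ Set.Icc a b := ⟨le_trans hmIcc.1 hz.1.le, hz.2⟩
      have hzδ : z ∈ δ m := by rw [hUeq]; exact ⟨hzU, hzIcc⟩
      have hfine : (TaggedPartition.single m z m le_rfl hz.1.le).IsFine δ :=
        isFine_single le_rfl hz.1.le
          ((Set.Ioc_subset_Icc_self).trans (hδ.icc_subset hmIcc hmδ hzδ))
      have hzS : z ∈ S :=
        ⟨hzIcc, P.append (TaggedPartition.single m z m le_rfl hz.1.le), hP.append hfine⟩
      exact absurd (hubS z hzS) (not_le.2 hz.1)
    · -- m < l : l covers m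
      have hIcc : l ∈ Set.Icc a b := ⟨le_trans hmIcc.1 hml, hlle⟩
      have hIoc : Set.Ioc m l = {l} := by
        ext z
        constructor
        · rintro ⟨hz1, hz2⟩
          rcases eq_or_lt_of_le hz2 with h | h
          · exact h
          · exact absurd (hlb (subset_closure ⟨hz1, h.le.trans hlle⟩)) (not_le.2 h)
        · rintro rfl
          exact ⟨hml', le_rfl⟩
      have hfine : (TaggedPartition.single m l l hml'.le le_rfl).IsFine δ := by
        apply isFine_single
        rw [hIoc]
        intro z hz
        rw [Set.mem_singleton_iff] at hz
        subst hz
        exact hδ.mem_self hIcc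
      have : l ∈ S := ⟨hIcc, P.append (TaggedPartition.single m l l hml'.le le_rfl), hP.append hfine⟩
      exact absurd (hubS l this) (not_le.2 hml')

end Cousin
section PSum

variable {K : Type*} [LinearOrder K] [TopologicalSpace K] [OrderTopology K] [CompactSpace K]
  [BoundedOrder K]

/-- Integral in terms of pure partition sums. -/
def HasPSum (f G : K → ℝ) (a b : K) (J : ℝ) : Prop :=
  ∀ ε : ℝ, 0 < ε → ∃ δ : K → Set K, IsGauge K a b δ ∧
    ∀ P : TaggedPartition K a b, P.IsFine δ → |psum f G P - J| < ε

variable {f G F : K → ℝ}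

omit [TopologicalSpace K] [OrderTopology K] [CompactSpace K] in
theorem icc_sub_univ (a b : K) : Set.Icc a b ⊆ Set.Icc (⊥ : K) (⊤ : K) :=
  Set.Icc_subset_Icc bot_le le_top

/-- Additivity: the partition sums over `[a,b]` converge to `F b - F a`. -/
theorem hasPSum_sub (hF : ∀ x : K, HasIntegral f G ⊥ x (F x)) {a b : K} (hab : a ≤ b) :
    HasPSum f G a b (F b - F a) := by
  intro ε hε
  obtain ⟨δ₁, hδ₁g, hδ₁⟩ := hF a (ε/2) (by linarith)
  obtain ⟨δ₂, hδ₂g, hδ₂⟩ := hF b (ε/2) (by linarith)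
  refine ⟨fun x => δ₂ x ∩ Set.Icc a b, hδ₂g.restrict (Set.Icc_subset_Icc bot_le le_rfl), ?_⟩
  intro P hP
  have hγg : IsGauge K ⊥ a (fun x => δ₁ x ∩ (δ₂ x ∩ Set.Icc (⊥:K) a)) :=
    hδ₁g.inter (hδ₂g.restrict (Set.Icc_subset_Icc le_rfl hab))
  obtain ⟨Q, hQ⟩ := cousin bot_le hγg
  have hQ1 : Q.IsFine δ₁ := hQ.mono (fun x => Set.inter_subset_left)
  have hQ2 : Q.IsFine δ₂ := hQ.mono (fun x => Set.inter_subset_right.trans Set.inter_subset_left)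
  have hP2 : P.IsFine δ₂ := hP.mono (fun x => Set.inter_subset_left)
  have h1 := hδ₂ (Q.append P) (hQ2.append hP2)
  have h2 := hδ₁ Q hQ1
  rw [riemannSum_append] at h1
  rw [abs_lt] at h1 h2 ⊢
  constructor <;> linarith
  
/-- Key local estimate: near `c`, `F y - F c ≈ f c * (G y - G c)`. -/
theorem key_local (hF : ∀ x : K, HasIntegral f G ⊥ x (F x)) (c : K) {ε : ℝ} (hε : 0 < ε) :
    ∃ V : Set K, V ∈ nhds c ∧ (V.OrdConnected) ∧
      ∀ y ∈ V, |F y - F c - f c * (G y - G c)| ≤ ε := by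
  obtain ⟨δ, hδg, hδ⟩ := hasPSum_sub hF (le_top : (⊥:K) ≤ ⊤) (ε/4) (by linarith)
  obtain ⟨hcδ, hcoc, U, hU, hUeq⟩ := hδg c ⟨bot_le, le_top⟩
  have hVnhds : δ c ∈ nhds c := by
    rw [hUeq, Set.Icc_bot_top, Set.inter_univ]
    exact hU.mem_nhds (by
      have := hcδ; rw [hUeq] at this; exact this.1)
  refine ⟨δ c, hVnhds, hcoc, ?_⟩
  intro y hy
  rcases le_total c y with hcy | hyc
  · -- c ≤ y, middle interval (c, y] tagged c
    obtain ⟨δ₁, hδ₁g, hδ₁⟩ := hasPSum_sub hF (bot_le : (⊥:K) ≤ c) (ε/4) (by linarith)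
    obtain ⟨δ₂, hδ₂g, hδ₂⟩ := hasPSum_sub hF (le_top : y ≤ ⊤) (ε/4) (by linarith)
    obtain ⟨Q, hQ⟩ := cousin bot_le
      (hδ₁g.inter (hδg.restrict (icc_sub_univ (⊥:K) c)))
    obtain ⟨R, hR⟩ := cousin le_top
      (hδ₂g.inter (hδg.restrict (icc_sub_univ y (⊤:K))))
    have hQ1 : Q.IsFine δ₁ := hQ.mono (fun x => Set.inter_subset_left)
    have hQδ : Q.IsFine δ := hQ.mono
      (fun x => Set.inter_subset_right.trans Set.inter_subset_left)
    have hR2 : R.IsFine δ₂ := hR.mono (fun x => Set.inter_subset_left)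
    have hRδ : R.IsFine δ := hR.mono
      (fun x => Set.inter_subset_right.trans Set.inter_subset_left)
    have hMδ : (TaggedPartition.single c y c le_rfl hcy).IsFine δ :=
      isFine_single le_rfl hcy
        (Set.Ioc_subset_Icc_self.trans (hδg.icc_subset ⟨bot_le, le_top⟩ hcδ hy))
    have hbig := hδ ((Q.append (TaggedPartition.single c y c le_rfl hcy)).append R)
      ((hQδ.append hMδ).append hRδ)
    have h1 := hδ₁ Q hQ1
    have h2 := hδ₂ R hR2
    rw [psum_append, psum_append, psum_single] at hbig
    rw [abs_lt] at hbig h1 h2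
    rw [abs_le]
    constructor <;> linarith
  · -- y ≤ c, middle interval (y, c] tagged c
    obtain ⟨δ₁, hδ₁g, hδ₁⟩ := hasPSum_sub hF (bot_le : (⊥:K) ≤ y) (ε/4) (by linarith)
    obtain ⟨δ₂, hδ₂g, hδ₂⟩ := hasPSum_sub hF (le_top : c ≤ ⊤) (ε/4) (by linarith)
    obtain ⟨Q, hQ⟩ := cousin bot_le
      (hδ₁g.inter (hδg.restrict (icc_sub_univ (⊥:K) y)))
    obtain ⟨R, hR⟩ := cousin le_top
      (hδ₂g.inter (hδg.restrict (icc_sub_univ c (⊤:K))))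
    have hQ1 : Q.IsFine δ₁ := hQ.mono (fun x => Set.inter_subset_left)
    have hQδ : Q.IsFine δ := hQ.mono
      (fun x => Set.inter_subset_right.trans Set.inter_subset_left)
    have hR2 : R.IsFine δ₂ := hR.mono (fun x => Set.inter_subset_left)
    have hRδ : R.IsFine δ := hR.mono
      (fun x => Set.inter_subset_right.trans Set.inter_subset_left)
    have hMδ : (TaggedPartition.single y c c hyc le_rfl).IsFine δ :=
      isFine_single hyc le_rfl
        (Set.Ioc_subset_Icc_self.trans (hδg.icc_subset ⟨bot_le, le_top⟩ hy hcδ))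
    have hbig := hδ ((Q.append (TaggedPartition.single y c c hyc le_rfl)).append R)
      ((hQδ.append hMδ).append hRδ)
    have h1 := hδ₁ Q hQ1
    have h2 := hδ₂ R hR2
    rw [psum_append, psum_append, psum_single] at hbig
    rw [abs_lt] at hbig h1 h2
    rw [abs_le]
    constructor <;> linarith

end PSum
section Topology

variable {K : Type*} [LinearOrder K] [TopologicalSpace K] [OrderTopology K] [CompactSpace K]
  [BoundedOrder K]

/-- If `c` is left-dense (and not `⊥`) then `𝓝[<] c` is nontrivial. -/
theorem nhdsWithin_Iio_neBot_of_dense {c : K} (hne : c ≠ ⊥) (h : ¬ ∃ y, y ⋖ c) :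
    (nhdsWithin c (Set.Iio c)).NeBot := by
  rw [← mem_closure_iff_nhdsWithin_neBot]
  have hbot : (⊥ : K) ∈ Set.Iio c := bot_lt_iff_ne_bot.2 hne
  obtain ⟨g, hgcl, hub⟩ : ∃ g, IsGreatest (closure (Set.Iio c)) g :=
    isClosed_closure.isCompact.exists_isGreatest ⟨⊥, subset_closure hbot⟩
  have hgc : g ≤ c := closure_minimal (fun z hz => le_of_lt hz) isClosed_Iic hgcl
  rcases eq_or_lt_of_le hgc with rfl | hlt
  · exact hgcl
  · exfalso
    refine h ⟨g, hlt, fun z hz1 hz2 => ?_⟩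
    exact absurd (hub (subset_closure hz2)) (not_le.2 hz1)

/-- If `c` has an immediate predecessor then `𝓝[<] c` is trivial. -/
theorem nhdsWithin_Iio_eq_bot_of_covby {p c : K} (h : p ⋖ c) :
    nhdsWithin c (Set.Iio c) = ⊥ := by
  have hIio : Set.Iio c = Set.Iic p := by
    ext z
    simp only [Set.mem_Iio, Set.mem_Iic]
    constructor
    · intro hz
      by_contra hzp
      exact (h.2 (not_le.1 hzp)) hz
    · intro hz
      exact lt_of_le_of_lt hz h.1
  rw [hIio]
  by_contra hb
  have : c ∈ closure (Set.Iic p) :=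
    mem_closure_iff_nhdsWithin_neBot.2 (Filter.neBot_iff.2 hb)
  rw [isClosed_Iic.closure_eq] at this
  exact absurd this (not_le.2 h.1)

theorem covby_eq_of_covby {x y z : K} (h1 : x ⋖ z) (h2 : y ⋖ z) : x = y := by
  rcases lt_trichotomy x y with h | h | h
  · exact absurd h2.1 (h1.2 h)
  · exact h
  · exact absurd h1.1 (h2.2 h)

theorem Lfun_bot (G : K → ℝ) : Lfun G (⊥ : K) = 0 := by
  simp [Lfun]

theorem Lfun_covby {p c : K} (G : K → ℝ) (h : p ⋖ c) : Lfun G c = G p := by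
  have hne : c ≠ ⊥ := (bot_le.trans_lt h.1).ne'
  have hex : ∃ y, y ⋖ c := ⟨p, h⟩
  rw [Lfun, if_neg hne, dif_pos hex]
  exact congrArg G (covby_eq_of_covby hex.choose_spec h)

theorem Lfun_dense {c : K} (G : K → ℝ) (hne : c ≠ ⊥) (h : ¬ ∃ y, y ⋖ c) :
    Lfun G c = Function.leftLim G c := by
  rw [Lfun, if_neg hne, dif_neg h]

end Topology

section Main

variable {K : Type*} [LinearOrder K] [TopologicalSpace K] [OrderTopology K] [CompactSpace K]
  [BoundedOrder K] {f G F : K → ℝ}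

/-- Right-continuity of the indefinite integral. -/
theorem F_right_cont (hG : Amenable G) (hF : ∀ x : K, HasIntegral f G ⊥ x (F x)) (c : K) :
    ContinuousWithinAt F (Set.Ici c) c := by
  rw [ContinuousWithinAt, Metric.tendsto_nhds]
  intro ε hε
  obtain ⟨V, hV, -, hVest⟩ := key_local hF c (show (0:ℝ) < ε/4 by linarith)
  have hfc : (0:ℝ) < |f c| + 1 := by positivity
  have hGc : ∀ᶠ y in nhdsWithin c (Set.Ici c), dist (G y) (G c) < ε/(4*(|f c|+1)) :=
    Metric.tendsto_nhds.1 (hG.1 c) _ (by positivity)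
  filter_upwards [mem_nhdsWithin_of_mem_nhds hV, hGc] with y hy1 hy2
  have h1 := hVest y hy1
  rw [Real.dist_eq] at hy2 ⊢
  have h2 : |F y - F c| ≤ |F y - F c - f c * (G y - G c)| + |f c| * |G y - G c| := by
    calc |F y - F c| = |(F y - F c - f c * (G y - G c)) + f c * (G y - G c)| := by ring_nf
      _ ≤ |F y - F c - f c * (G y - G c)| + |f c * (G y - G c)| := abs_add_le _ _
      _ = |F y - F c - f c * (G y - G c)| + |f c| * |G y - G c| := by rw [abs_mul]
  have h3 : |f c| * |G y - G c| ≤ (|f c| + 1) * |G y - G c| :=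
    mul_le_mul_of_nonneg_right (by linarith) (abs_nonneg _)
  have h4 : (|f c| + 1) * |G y - G c| < (|f c| + 1) * (ε/(4*(|f c|+1))) :=
    mul_lt_mul_of_pos_left hy2 hfc
  have h5 : (|f c| + 1) * (ε/(4*(|f c|+1))) = ε/4 := by
    field_simp
  linarith

/-- Left-limit behaviour of the indefinite integral. -/
theorem F_left_tendsto (hF : ∀ x : K, HasIntegral f G ⊥ x (F x)) {c : K} {l : ℝ}
    (hl : Filter.Tendsto G (nhdsWithin c (Set.Iio c)) (nhds l)) :
    Filter.Tendsto F (nhdsWithin c (Set.Iio c)) (nhds (F c + f c * (l - G c))) := by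
  rw [Metric.tendsto_nhds]
  intro ε hε
  obtain ⟨V, hV, -, hVest⟩ := key_local hF c (show (0:ℝ) < ε/4 by linarith)
  have hfc : (0:ℝ) < |f c| + 1 := by positivity
  have hGc : ∀ᶠ y in nhdsWithin c (Set.Iio c), dist (G y) l < ε/(4*(|f c|+1)) :=
    Metric.tendsto_nhds.1 hl _ (by positivity)
  filter_upwards [mem_nhdsWithin_of_mem_nhds hV, hGc] with y hy1 hy2
  have h1 := hVest y hy1
  rw [Real.dist_eq] at hy2 ⊢
  have h2 : |F y - (F c + f c * (l - G c))| ≤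
      |F y - F c - f c * (G y - G c)| + |f c| * |G y - l| := by
    calc |F y - (F c + f c * (l - G c))|
        = |(F y - F c - f c * (G y - G c)) + f c * (G y - l)| := by ring_nf
      _ ≤ |F y - F c - f c * (G y - G c)| + |f c * (G y - l)| := abs_add_le _ _
      _ = |F y - F c - f c * (G y - G c)| + |f c| * |G y - l| := by rw [abs_mul]
  have h3 : |f c| * |G y - l| ≤ (|f c| + 1) * |G y - l| :=
    mul_le_mul_of_nonneg_right (by linarith) (abs_nonneg _)
  have h4 : (|f c| + 1) * |G y - l| < (|f c| + 1) * (ε/(4*(|f c|+1))) :=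
    mul_lt_mul_of_pos_left hy2 hfc
  have h5 : (|f c| + 1) * (ε/(4*(|f c|+1))) = ε/4 := by
    field_simp
  linarith

theorem eq_of_forall_abs_sub_lt {x y : ℝ} (h : ∀ ε : ℝ, 0 < ε → |x - y| < ε) : x = y := by
  by_contra hne
  exact lt_irrefl _ (h |x - y| (abs_pos.2 (sub_ne_zero.2 hne)))

/-- Value at `⊥`. -/
theorem F_bot (hF : ∀ x : K, HasIntegral f G ⊥ x (F x)) : F ⊥ = f ⊥ * G ⊥ := by
  refine (eq_of_forall_abs_sub_lt fun ε hε => ?_).symm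
  obtain ⟨δ, hδg, hδ⟩ := hF ⊥ ε hε
  have := hδ (TaggedPartition.refl ⊥) (isFine_refl δ)
  rw [riemannSum_eq, psum_refl, add_zero] at this
  exact this

/-- Jump at a point with immediate predecessor. -/
theorem F_jump_covby (hF : ∀ x : K, HasIntegral f G ⊥ x (F x)) {p c : K} (h : p ⋖ c) :
    F c - F p = f c * (G c - G p) := by
  refine eq_of_forall_abs_sub_lt fun ε hε => ?_
  obtain ⟨δ, hδg, hδ⟩ := hasPSum_sub hF h.1.le ε hε
  have hIoc : Set.Ioc p c = {c} := by
    ext z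
    simp only [Set.mem_Ioc, Set.mem_singleton_iff]
    constructor
    · rintro ⟨hz1, hz2⟩
      rcases eq_or_lt_of_le hz2 with h' | h'
      · exact h'
      · exact absurd h' (h.2 hz1)
    · rintro rfl
      exact ⟨h.1, le_rfl⟩
  have hfine : (TaggedPartition.single p c c h.1.le le_rfl).IsFine δ := by
    apply isFine_single
    rw [hIoc]
    intro z hz
    rw [Set.mem_singleton_iff] at hz
    subst hz
    exact hδg.mem_self ⟨h.1.le, le_rfl⟩
  have := hδ _ hfine
  rwa [psum_single, abs_sub_comm] at this

end Main
section Exists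

variable {K : Type*} [LinearOrder K] [TopologicalSpace K] [OrderTopology K] [CompactSpace K]
  [BoundedOrder K] {f G : K → ℝ} {A : ℝ}

theorem exists_integral (hf : HasIntegral f G (⊥ : K) ⊤ A) (c : K) :
    ∃ B, HasIntegral f G (⊥ : K) c B := by
  choose γ hγg hγ using fun n : ℕ => hf (1/((n:ℝ)+1)) (by positivity)
  have hopen : ∀ n x, IsOpen (γ n x) := by
    intro n x
    obtain ⟨-, -, U, hU, hUeq⟩ := hγg n x ⟨bot_le, le_top⟩
    rw [hUeq, Set.Icc_bot_top, Set.inter_univ]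
    exact hU
  set Δ : ℕ → K → Set K := fun n x => ⋂ i ∈ Finset.range (n+1), γ i x with hΔdef
  have hΔg : ∀ n, IsGauge K ⊥ ⊤ (Δ n) := by
    intro n x hx
    refine ⟨Set.mem_iInter₂.2 fun i _ => (hγg i x hx).1,
      Set.ordConnected_iInter fun i => Set.ordConnected_iInter fun _ => (hγg i x hx).2.1,
      Δ n x, isOpen_biInter_finset fun i _ => hopen i x,
      by rw [Set.Icc_bot_top, Set.inter_univ]⟩
  have hΔsub : ∀ n x, Δ n x ⊆ γ n x := by
    intro n x z hz
    exact Set.mem_iInter₂.1 hz n (Finset.self_mem_range_succ n)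
  have hΔmono : ∀ {m n : ℕ}, n ≤ m → ∀ x, Δ m x ⊆ Δ n x := by
    intro m n h x z hz
    refine Set.mem_iInter₂.2 fun i hi => Set.mem_iInter₂.1 hz i ?_
    rw [Finset.mem_range] at hi ⊢
    omega
  have hresc : ∀ n, IsGauge K ⊥ c (fun x => Δ n x ∩ Set.Icc (⊥:K) c) :=
    fun n => (hΔg n).restrict (icc_sub_univ _ _)
  have hrest : ∀ n, IsGauge K c ⊤ (fun x => Δ n x ∩ Set.Icc c (⊤:K)) :=
    fun n => (hΔg n).restrict (icc_sub_univ _ _)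
  choose P hP using fun n => cousin (bot_le : (⊥:K) ≤ c) (hresc n)
  choose R hR using fun n => cousin (le_top : c ≤ (⊤:K)) (hrest n)
  set s : ℕ → ℝ := fun n => riemannSum f G (P n) with hsdef
  have key : ∀ N n : ℕ, N ≤ n → |s n + psum f G (R N) - A| < 1/((N:ℝ)+1) := by
    intro N n hNn
    have hfine : ((P n).append (R N)).IsFine (γ N) :=
      ((hP n).mono fun x => Set.inter_subset_left.trans
          ((hΔmono hNn x).trans (hΔsub N x))).append
        ((hR N).mono fun x => Set.inter_subset_left.trans (hΔsub N x))
    have := hγ N _ hfine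
    rwa [riemannSum_append] at this
  have hcauchy : CauchySeq s := by
    rw [Metric.cauchySeq_iff']
    intro ε hε
    obtain ⟨N, hN⟩ := exists_nat_one_div_lt (show (0:ℝ) < ε/2 by linarith)
    refine ⟨N, fun n hn => ?_⟩
    have h1 := key N n hn
    have h2 := key N N le_rfl
    rw [Real.dist_eq]
    rw [abs_lt] at h1 h2 ⊢
    constructor <;> linarith
  obtain ⟨B, hB⟩ := cauchySeq_tendsto_of_complete hcauchy
  refine ⟨B, ?_⟩
  intro ε hε
  obtain ⟨N, hN⟩ := exists_nat_one_div_lt (show (0:ℝ) < ε/4 by linarith)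
  refine ⟨fun x => Δ N x ∩ Set.Icc (⊥:K) c, hresc N, ?_⟩
  intro Q hQ
  have hclaim : ∀ n, N ≤ n → |riemannSum f G Q - s n| < 2/((N:ℝ)+1) := by
    intro n hn
    have hfine : (Q.append (R N)).IsFine (γ N) :=
      (hQ.mono fun x => Set.inter_subset_left.trans (hΔsub N x)).append
        ((hR N).mono fun x => Set.inter_subset_left.trans (hΔsub N x))
    have h1 := hγ N _ hfine
    rw [riemannSum_append] at h1
    have h2 := key N n hn
    rw [abs_lt] at h1 h2 ⊢
    have : 2/((N:ℝ)+1) = 1/((N:ℝ)+1) + 1/((N:ℝ)+1) := by ring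
    constructor <;> linarith [this]
  have hlim : Filter.Tendsto (fun n => |riemannSum f G Q - s n|) Filter.atTop
      (nhds |riemannSum f G Q - B|) := (tendsto_const_nhds.sub hB).abs
  have hle : |riemannSum f G Q - B| ≤ 2/((N:ℝ)+1) :=
    le_of_tendsto hlim (Filter.eventually_atTop.2 ⟨N, fun n hn => (hclaim n hn).le⟩)
  have h2 : 2/((N:ℝ)+1) = 2*(1/((N:ℝ)+1)) := by ring
  linarith

end Exists

theorem indefinite_integral_amenable {K : Type*} [LinearOrder K] [TopologicalSpace K]
    [OrderTopology K] [CompactSpace K] [BoundedOrder K] (f G : K → ℝ) (hG : Amenable G)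
    (A : ℝ) (hf : HasIntegral f G (⊥ : K) ⊤ A) :
    (∀ x : K, ∃ B, HasIntegral f G (⊥ : K) x B) ∧
    ∀ F : K → ℝ, (∀ x : K, HasIntegral f G (⊥ : K) x (F x)) →
      Amenable F ∧ (∀ c : K, F c - Lfun F c = f c * (G c - Lfun G c)) ∧
      (∀ c : K, ContinuousAt G c → ContinuousAt F c) := by
  constructor
  · exact fun x => exists_integral hf x
  · intro F hF
    refine ⟨⟨fun x => F_right_cont hG hF x, fun x hne hd => ?_, fun x _ _ => ?_⟩, ?_, ?_⟩
    · obtain ⟨l, hl⟩ := hG.2.1 x hne hd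
      exact ⟨F x + f x * (l - G x), F_left_tendsto hF hl⟩
    · exact ⟨F x, (F_right_cont hG hF x).mono Set.Ioi_subset_Ici_self⟩
    · intro c
      by_cases hbot : c = ⊥
      · subst hbot
        rw [Lfun_bot, Lfun_bot, F_bot hF]
        ring
      · by_cases hcov : ∃ y, y ⋖ c
        · obtain ⟨p, hp⟩ := hcov
          rw [Lfun_covby F hp, Lfun_covby G hp]
          exact F_jump_covby hF hp
        · have hne := nhdsWithin_Iio_neBot_of_dense hbot hcov
          obtain ⟨l, hl⟩ := hG.2.1 c hbot hcov
          rw [Lfun_dense F hbot hcov, Lfun_dense G hbot hcov]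
          have hGlim : Function.leftLim G c = l := @leftLim_eq_of_tendsto _ _ _ _ _ _ _ _ _ _ hne hl
          have hFlim : Function.leftLim F c = F c + f c * (l - G c) :=
            @leftLim_eq_of_tendsto _ _ _ _ _ _ _ _ _ _ hne (F_left_tendsto hF hl)
          rw [hGlim, hFlim]
          ring
    · intro c hGc
      have hright : ContinuousWithinAt F (Set.Ici c) c := F_right_cont hG hF c
      have hleft : Filter.Tendsto F (nhdsWithin c (Set.Iio c)) (nhds (F c)) := by
        rcases eq_or_ne (nhdsWithin c (Set.Iio c)) ⊥ with hb | hb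
        · rw [hb]
          exact Filter.tendsto_bot
        · have hGl : Filter.Tendsto G (nhdsWithin c (Set.Iio c)) (nhds (G c)) :=
            hGc.tendsto.mono_left nhdsWithin_le_nhds
          have := F_left_tendsto hF hGl
          simpa using this
      rw [ContinuousAt, ← nhdsLT_sup_nhdsGE c, Filter.tendsto_sup]
      exact ⟨hleft, hright⟩
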